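/- Let Σ be a compact topological space, J an open interval, and f ∈ C¹(Σ × J). Then the function f_max(t) = max_{x∈Σ} f(x,t) is locally Lipschitz continuous on J, and for almost every t, its derivative satisfies f_max'(t) = (∂f/∂t)(x_t, t) where x_t is any point where the maximum f(·,t) is attained. -/

import Mathlib

open Set MeasureTheory

/-- Hamilton's trick: for `Σ` compact and `f ∈ C¹(Σ × J)`, the function
`f_max(t) = max_x f(x,t)` is locally Lipschitz on the open interval `J = (a,b)`, and for
a.e. `t`, `f_max'(t) = ∂f/∂t (x_t, t)` at any maximum point `x_t`. -/
theorem hamilton_trick {S : Type*} [TopologicalSpace S] [CompactSpace S] [Nonempty S]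
    (a b : ℝ) (f ft : S × ℝ → ℝ)
    (hf : Continuous f) (hft : Continuous ft)
    (hderiv : ∀ x : S, ∀ t ∈ Ioo a b, HasDerivAt (fun s => f (x, s)) (ft (x, t)) t) :
    (∀ t ∈ Ioo a b, ∃ ε > 0, ∃ K : NNReal,
        LipschitzOnWith K (fun s => ⨆ x : S, f (x, s)) (Ioo (t - ε) (t + ε)))
    ∧ (∀ᵐ t ∂(volume.restrict (Ioo a b)), ∀ x : S,
        (∀ y : S, f (y, t) ≤ f (x, t)) →
          HasDerivAt (fun s => ⨆ z : S, f (z, s)) (ft (x, t)) t) := by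
  set F : ℝ → ℝ := fun s => ⨆ x : S, f (x, s) with hF
  have hbdd : ∀ s : ℝ, BddAbove (Set.range fun x : S => f (x, s)) := by
    intro s
    exact (isCompact_range (hf.comp (continuous_id.prodMk continuous_const))).bddAbove
  have hle : ∀ (x : S) (s : ℝ), f (x, s) ≤ F s := fun x s => le_ciSup (hbdd s) x
  -- Key local Lipschitz fact
  have key : ∀ t ∈ Ioo a b, ∃ ε > 0, Ioo (t - ε) (t + ε) ⊆ Ioo a b ∧
      ∃ K : NNReal, LipschitzOnWith K F (Ioo (t - ε) (t + ε)) := by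
    intro t ht
    set ε : ℝ := min (t - a) (b - t) / 2 with hε
    have hε0 : 0 < ε := by
      have h1 : 0 < t - a := by simp [sub_pos, ht.1]
      have h2 : 0 < b - t := by simp [sub_pos, ht.2]
      positivity
    have hsub : Icc (t - ε) (t + ε) ⊆ Ioo a b := by
      intro s hs
      constructor
      · have : ε < t - a := by
          have := min_le_left (t - a) (b - t)
          have h1 : 0 < t - a := by simp [sub_pos, ht.1]
          nlinarith [hs.1]
        linarith [hs.1]
      · have : ε < b - t := by
          have := min_le_right (t - a) (b - t)
          have h2 : 0 < b - t := by simp [sub_pos, ht.2]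
          nlinarith
        linarith [hs.2]
    obtain ⟨C, hC⟩ := (isCompact_univ.prod isCompact_Icc).exists_bound_of_continuousOn
      (s := (univ : Set S) ×ˢ Icc (t - ε) (t + ε)) hft.continuousOn
    set K : NNReal := (C ⊔ 0).toNNReal with hKdef
    have hKC : C ≤ (K : ℝ) := by
      rw [hKdef, Real.coe_toNNReal _ (le_max_right _ _)]
      exact le_max_left _ _
    refine ⟨ε, hε0, fun s hs => hsub ⟨hs.1.le, hs.2.le⟩, K, ?_⟩
    rw [lipschitzOnWith_iff_dist_le_mul]
    intro s₁ hs₁ s₂ hs₂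
    have per_x : ∀ z : S, ‖f (z, s₁) - f (z, s₂)‖ ≤ (K : ℝ) * ‖s₁ - s₂‖ := by
      intro z
      apply Convex.norm_image_sub_le_of_norm_hasDerivWithin_le
        (f := fun u => f (z, u)) (f' := fun u => ft (z, u)) (s := Ioo (t - ε) (t + ε))
      · intro u hu
        exact (hderiv z u (hsub ⟨hu.1.le, hu.2.le⟩)).hasDerivWithinAt
      · intro u hu
        exact le_trans (hC (z, u) ⟨trivial, hu.1.le, hu.2.le⟩) hKC
      · exact convex_Ioo _ _
      · exact hs₂
      · exact hs₁
    have hboth : ∀ u v : ℝ, (∀ z : S, ‖f (z, u) - f (z, v)‖ ≤ (K : ℝ) * ‖u - v‖) →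
        F u ≤ F v + (K : ℝ) * ‖u - v‖ := by
      intro u v h
      apply ciSup_le
      intro z
      have := h z
      have h1 : f (z, u) - f (z, v) ≤ (K : ℝ) * ‖u - v‖ :=
        (abs_le.mp (by simpa [Real.norm_eq_abs] using this)).2
      have h2 := hle z v
      linarith
    have h1 := hboth s₁ s₂ per_x
    have h2 := hboth s₂ s₁ (fun z => by
      have := per_x z
      rwa [norm_sub_rev, norm_sub_rev s₁ s₂] at this)
    rw [Real.dist_eq, Real.dist_eq, abs_sub_le_iff]
    simp only [Real.norm_eq_abs] at h1 h2
    rw [abs_sub_comm s₂ s₁] at h2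
    constructor <;> linarith
  constructor
  · intro t ht
    obtain ⟨ε, hε0, _, K, hK⟩ := key t ht
    exact ⟨ε, hε0, K, hK⟩
  · have hD : volume {t | t ∈ Ioo a b ∧ ¬ DifferentiableAt ℝ F t} = 0 := by
      apply measure_null_of_locally_null
      intro t ht
      obtain ⟨ε, hε0, hsub, K, hK⟩ := key t ht.1
      refine ⟨{u | u ∈ Ioo a b ∧ ¬ DifferentiableAt ℝ F u} ∩ Ioo (t - ε) (t + ε), ?_, ?_⟩
      · exact inter_mem_nhdsWithin _ (Ioo_mem_nhds (by linarith) (by linarith))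
      · have hae := hK.ae_differentiableWithinAt_of_mem (μ := volume)
        rw [Filter.eventually_iff, mem_ae_iff] at hae
        apply measure_mono_null _ hae
        rintro s ⟨⟨_, hnd⟩, hsI⟩ hcon
        simp only [mem_setOf_eq] at hcon
        exact hnd ((hcon hsI).differentiableAt (Ioo_mem_nhds hsI.1 hsI.2))
    have hdiff_ae : ∀ᵐ t ∂(volume.restrict (Ioo a b)), DifferentiableAt ℝ F t := by
      rw [ae_restrict_iff' measurableSet_Ioo, ae_iff]
      apply measure_mono_null _ hD
      intro t ht
      simp only [mem_setOf_eq] at ht ⊢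
      exact _root_.not_imp.mp ht
    filter_upwards [hdiff_ae, ae_restrict_mem measurableSet_Ioo] with t hdF htI
    intro x hx
    have hh : HasDerivAt (fun s => f (x, s)) (ft (x, t)) t := hderiv x t htI
    have hFt : F t = f (x, t) := le_antisymm (ciSup_le hx) (hle x t)
    set g : ℝ → ℝ := fun s => F s - f (x, s) with hg
    have hgd : DifferentiableAt ℝ g t := hdF.sub hh.differentiableAt
    have hmin : IsLocalMin g t := by
      apply Filter.Eventually.of_forall
      intro s
      have h1 := hle x s
      simp only [hg, hFt, sub_self]
      linarith
    have h0 : deriv g t = 0 := hmin.deriv_eq_zero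
    have hg0 : HasDerivAt g 0 t := h0 ▸ hgd.hasDerivAt
    have hsum := hg0.add hh
    simp only [hg, Pi.add_def, sub_add_cancel, zero_add] at hsum
    exact hsum
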